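/- Let p, n, q be natural numbers with 1 ≤ p ≤ n + q + 1, and let b₁,…,bₙ, c₁,…,c_q : ℝ → ℝ be Lipschitz with constants L. Then the kernel K_B(ξ,s) := (1/(2π)) · [∏ᵢ (tanh((bᵢ(ξ)-bᵢ(ξ-s))/2)/tan(s/2))] · [∏ᵢ ((cᵢ(ξ)-cᵢ(ξ-s))/2 / tan(s/2))] · (tan(s/2))^{p-1} / ∏ⱼ(1 + (tanh((aⱼ(ξ)-aⱼ(ξ-s))/2)/tan(s/2))²) is bounded: |K_B(ξ,s)| ≤ C·∏ᵢ L(cᵢ) for all ξ ∈ ℝ and 0 < |s| < π, where C depends only on n, m, p, q and the Lipschitz constants of the bᵢ. -/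

import Mathlib

open Real NNReal

/-- For nonnegative `x`, `tanh x ≤ x`. -/
lemma tanh_le_self {x : ℝ} (hx : 0 ≤ x) : Real.tanh x ≤ x := by
  have hmono : MonotoneOn (fun y : ℝ => y * Real.cosh y - Real.sinh y) (Set.Ici (0 : ℝ)) := by
    have hderiv : ∀ t : ℝ, HasDerivAt (fun y : ℝ => y * Real.cosh y - Real.sinh y)
        (t * Real.sinh t) t := by
      intro t
      have h : HasDerivAt (fun y : ℝ => y * Real.cosh y - Real.sinh y)
          (1 * Real.cosh t + t * Real.sinh t - Real.cosh t) t :=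
        ((hasDerivAt_id' t).mul (Real.hasDerivAt_cosh t)).sub (Real.hasDerivAt_sinh t)
      convert h using 1
      ring
    apply monotoneOn_of_deriv_nonneg (convex_Ici 0)
    · exact (Continuous.sub (continuous_id.mul Real.continuous_cosh)
        Real.continuous_sinh).continuousOn
    · intro t ht
      exact ((hderiv t).differentiableAt).differentiableWithinAt
    · intro t ht
      rw [(hderiv t).deriv]
      have ht0 : 0 < t := by simpa using ht
      have := Real.sinh_pos_iff.mpr ht0
      positivity
  have h0 : (fun y : ℝ => y * Real.cosh y - Real.sinh y) 0 ≤
      (fun y : ℝ => y * Real.cosh y - Real.sinh y) x :=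
    hmono (by simp) (by simpa using hx) hx
  simp only [Real.sinh_zero, Real.cosh_zero, mul_one, zero_mul, sub_zero] at h0
  have hcosh : 0 < Real.cosh x := Real.cosh_pos x
  rw [Real.tanh_eq_sinh_div_cosh, div_le_iff₀ hcosh]
  linarith

/-- `|tanh x| ≤ |x|`. -/
lemma abs_tanh_le_abs (x : ℝ) : |Real.tanh x| ≤ |x| := by
  rcases le_or_gt 0 x with hx | hx
  · rw [abs_of_nonneg hx, abs_of_nonneg]
    · exact tanh_le_self hx
    · rw [Real.tanh_eq_sinh_div_cosh]
      exact div_nonneg (by simpa using Real.sinh_nonneg_iff.mpr hx) (Real.cosh_pos x).le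
  · rw [abs_of_neg hx, abs_of_neg]
    · have := tanh_le_self (x := -x) (by linarith)
      rw [Real.tanh_neg] at this
      linarith
    · rw [Real.tanh_eq_sinh_div_cosh]
      apply div_neg_of_neg_of_pos _ (Real.cosh_pos x)
      simpa using Real.sinh_neg_iff.mpr hx

/-- `|tanh x| ≤ 1`. -/
lemma abs_tanh_le_one (x : ℝ) : |Real.tanh x| ≤ 1 := by
  rw [Real.tanh_eq_sinh_div_cosh, abs_div, abs_of_pos (Real.cosh_pos x),
    div_le_one (Real.cosh_pos x)]
  exact (Real.abs_sinh x).le.trans ((Real.sinh_lt_cosh (x := |x|)).le.trans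
    (Real.cosh_abs x).le)

/-- Boundedness of the kernel of the operators `B_{n,m}^{p,q}` when `1 ≤ p ≤ n + q + 1`:
the kernel is bounded by a constant depending only on `n, m, p, q` and the Lipschitz
constants of the `bᵢ`, times the product of the Lipschitz constants of the `cᵢ`. -/
theorem kernel_Bnmpq_bounded (n m p q : ℕ) (hp1 : 1 ≤ p) (hp2 : p ≤ n + q + 1)
    (Lb : Fin n → ℝ≥0) :
    ∃ C : ℝ, 0 < C ∧
      ∀ (a : Fin m → ℝ → ℝ) (b : Fin n → ℝ → ℝ) (c : Fin q → ℝ → ℝ)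
        (Lc : Fin q → ℝ≥0),
        (∀ i, LipschitzWith (Lb i) (b i)) →
        (∀ i, LipschitzWith (Lc i) (c i)) →
        ∀ (ξ s : ℝ), 0 < |s| → |s| < π →
          |(1 / (2 * π)) *
              (∏ i, Real.tanh ((b i ξ - b i (ξ - s)) / 2) / Real.tan (s / 2)) *
              (∏ i, ((c i ξ - c i (ξ - s)) / 2) / Real.tan (s / 2)) *
              Real.tan (s / 2) ^ (p - 1) /
              ∏ j, (1 + (Real.tanh ((a j ξ - a j (ξ - s)) / 2) / Real.tan (s / 2)) ^ 2)| ≤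
            C * ∏ i, (Lc i : ℝ) := by
  have hπ : (0 : ℝ) < π := Real.pi_pos
  have hM : (1 : ℝ) ≤ ∏ i, max 1 (Lb i : ℝ) := by
    calc (1 : ℝ) = ∏ _i : Fin n, (1 : ℝ) := by simp
      _ ≤ _ := Finset.prod_le_prod (fun i _ => zero_le_one) (fun i _ => le_max_left _ _)
  refine ⟨(1 / (2 * π)) * (∏ i, max 1 (Lb i : ℝ)) * (π / 2) ^ q, by positivity, ?_⟩
  intro a b c Lc hb hc ξ s hs0 hsπ
  -- basic quantities
  set τ := |Real.tan (s / 2)| with hτdef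
  set t := min 1 (|s| / 2) with htdef
  have hs2 : |s| / 2 < π / 2 := by linarith
  have habs : |Real.tan (s / 2)| = Real.tan (|s| / 2) := by
    rcases lt_or_ge s 0 with hneg | hpos
    · have h1 : |s| = -s := abs_of_neg hneg
      have hpos2 : 0 < Real.tan (-s / 2) :=
        Real.tan_pos_of_pos_of_lt_pi_div_two (by linarith) (by rw [h1] at hs2; linarith)
      rw [h1, neg_div, Real.tan_neg]
      have hneg2 : Real.tan (s / 2) < 0 := by
        rw [neg_div, Real.tan_neg] at hpos2; linarith
      exact abs_of_neg hneg2
    · have h1 : |s| = s := abs_of_nonneg hpos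
      rw [h1]
      exact abs_of_pos (Real.tan_pos_of_pos_of_lt_pi_div_two
        (by rw [h1] at hs0; linarith) (by rw [h1] at hs2; linarith))
  have hsτ : |s| / 2 ≤ τ := by
    rw [hτdef, habs]
    exact (Real.lt_tan (by linarith) hs2).le
  have hτ0 : 0 < τ := lt_of_lt_of_le (by linarith) hsτ
  have ht0 : 0 < t := lt_min one_pos (by linarith)
  have ht1 : t ≤ 1 := min_le_left _ _
  have htτ : t ≤ τ := le_trans (min_le_right _ _) hsτ
  -- bound on denominator
  set D := ∏ j, (1 + (Real.tanh ((a j ξ - a j (ξ - s)) / 2) / Real.tan (s / 2)) ^ 2) with hDdef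
  have hD : 1 ≤ D := by
    rw [hDdef]
    calc (1 : ℝ) = ∏ _j : Fin m, (1 : ℝ) := by simp
      _ ≤ _ := Finset.prod_le_prod (fun j _ => zero_le_one)
          (fun j _ => le_add_of_nonneg_right (sq_nonneg _))
  -- bound on b-product
  have hB1 : |∏ i, Real.tanh ((b i ξ - b i (ξ - s)) / 2) / Real.tan (s / 2)| ≤
      (∏ i, max 1 (Lb i : ℝ)) * (t / τ) ^ n := by
    rw [Finset.abs_prod]
    calc ∏ i, |Real.tanh ((b i ξ - b i (ξ - s)) / 2) / Real.tan (s / 2)|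
        ≤ ∏ i, max 1 (Lb i : ℝ) * (t / τ) := by
          apply Finset.prod_le_prod (fun i _ => abs_nonneg _)
          intro i _
          rw [abs_div]
          have hlip : |b i ξ - b i (ξ - s)| ≤ (Lb i : ℝ) * |s| := by
            have := (hb i).dist_le_mul ξ (ξ - s)
            simpa [Real.dist_eq, abs_sub_comm] using this
          have h1 : |Real.tanh ((b i ξ - b i (ξ - s)) / 2)| ≤ max 1 (Lb i : ℝ) * t := by
            rcases le_total (|s| / 2) 1 with h | h
            · have : t = |s| / 2 := min_eq_right h
              rw [this]
              calc |Real.tanh ((b i ξ - b i (ξ - s)) / 2)| ≤ |(b i ξ - b i (ξ - s)) / 2| :=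
                    abs_tanh_le_abs _
                _ = |b i ξ - b i (ξ - s)| / 2 := by rw [abs_div]; norm_num
                _ ≤ (Lb i : ℝ) * (|s| / 2) := by linarith
                _ ≤ max 1 (Lb i : ℝ) * (|s| / 2) := by
                    have h2 := le_max_right (1 : ℝ) (Lb i : ℝ)
                    have h3 : (0 : ℝ) ≤ |s| / 2 := by positivity
                    nlinarith
            · have : t = 1 := min_eq_left h
              rw [this, mul_one]
              exact (abs_tanh_le_one _).trans (le_max_left _ _)
          calc |Real.tanh ((b i ξ - b i (ξ - s)) / 2)| / τ ≤ max 1 (Lb i : ℝ) * t / τ := by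
                gcongr
            _ = max 1 (Lb i : ℝ) * (t / τ) := by ring
      _ = (∏ i, max 1 (Lb i : ℝ)) * (t / τ) ^ n := by
          rw [Finset.prod_mul_distrib, Finset.prod_const, Finset.card_univ, Fintype.card_fin]
  -- bound on c-product
  have hB2 : |∏ i, ((c i ξ - c i (ξ - s)) / 2) / Real.tan (s / 2)| ≤
      (∏ i, (Lc i : ℝ)) * ((π / 2) * (t / τ)) ^ q := by
    rw [Finset.abs_prod]
    calc ∏ i, |((c i ξ - c i (ξ - s)) / 2) / Real.tan (s / 2)|
        ≤ ∏ i, (Lc i : ℝ) * ((π / 2) * (t / τ)) := by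
          apply Finset.prod_le_prod (fun i _ => abs_nonneg _)
          intro i _
          rw [abs_div]
          have hlip : |c i ξ - c i (ξ - s)| ≤ (Lc i : ℝ) * |s| := by
            have := (hc i).dist_le_mul ξ (ξ - s)
            simpa [Real.dist_eq, abs_sub_comm] using this
          have hst : |s| / 2 ≤ (π / 2) * t := by
            rcases le_total (|s| / 2) 1 with h | h
            · have heq : t = |s| / 2 := min_eq_right h
              rw [heq]
              nlinarith [Real.pi_gt_three, abs_nonneg s]
            · have heq : t = 1 := min_eq_left h
              rw [heq, mul_one]
              linarith
          have h1 : |(c i ξ - c i (ξ - s)) / 2| ≤ (Lc i : ℝ) * ((π / 2) * t) := by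
            rw [abs_div]
            have h2 : |c i ξ - c i (ξ - s)| / |(2 : ℝ)| ≤ (Lc i : ℝ) * (|s| / 2) := by
              rw [abs_two]; linarith
            refine h2.trans ?_
            apply mul_le_mul_of_nonneg_left hst (Lc i).coe_nonneg
          calc |(c i ξ - c i (ξ - s)) / 2| / τ ≤ (Lc i : ℝ) * ((π / 2) * t) / τ := by
                gcongr
            _ = (Lc i : ℝ) * ((π / 2) * (t / τ)) := by ring
      _ = (∏ i, (Lc i : ℝ)) * ((π / 2) * (t / τ)) ^ q := by
          rw [Finset.prod_mul_distrib, Finset.prod_const, Finset.card_univ, Fintype.card_fin]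
  -- the key power inequality
  have hkey : (t / τ) ^ (n + q) * τ ^ (p - 1) ≤ 1 := by
    have hk : n + q = (p - 1) + (n + q + 1 - p) := by omega
    set k := n + q + 1 - p with hkdef
    rw [div_pow]
    rw [div_mul_eq_mul_div, div_le_one (by positivity)]
    rw [hk, pow_add, pow_add]
    have h1 : t ^ (p - 1) ≤ 1 := pow_le_one₀ ht0.le ht1
    have h2 : t ^ k ≤ τ ^ k := pow_le_pow_left₀ ht0.le htτ _
    have h3 : (0 : ℝ) < τ ^ (p - 1) := pow_pos hτ0 _
    have h4 : (0 : ℝ) ≤ t ^ k := pow_nonneg ht0.le _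
    calc t ^ (p - 1) * t ^ k * τ ^ (p - 1) ≤ 1 * τ ^ k * τ ^ (p - 1) := by
          apply mul_le_mul_of_nonneg_right _ h3.le
          exact mul_le_mul h1 h2 h4 zero_le_one
      _ = τ ^ (p - 1) * τ ^ k := by ring
  -- assemble
  rw [abs_div]
  have hDabs : 1 ≤ |D| := by rwa [abs_of_pos (lt_of_lt_of_le one_pos hD)]
  calc |(1 / (2 * π)) * (∏ i, Real.tanh ((b i ξ - b i (ξ - s)) / 2) / Real.tan (s / 2)) *
        (∏ i, ((c i ξ - c i (ξ - s)) / 2) / Real.tan (s / 2)) * Real.tan (s / 2) ^ (p - 1)| / |D|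
      ≤ |(1 / (2 * π)) * (∏ i, Real.tanh ((b i ξ - b i (ξ - s)) / 2) / Real.tan (s / 2)) *
        (∏ i, ((c i ξ - c i (ξ - s)) / 2) / Real.tan (s / 2)) * Real.tan (s / 2) ^ (p - 1)| :=
        div_le_self (abs_nonneg _) hDabs
    _ = |1 / (2 * π)| * |∏ i, Real.tanh ((b i ξ - b i (ξ - s)) / 2) / Real.tan (s / 2)| *
        |∏ i, ((c i ξ - c i (ξ - s)) / 2) / Real.tan (s / 2)| * τ ^ (p - 1) := by
        rw [abs_mul, abs_mul, abs_mul, abs_pow]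
    _ ≤ |1 / (2 * π)| * ((∏ i, max 1 (Lb i : ℝ)) * (t / τ) ^ n) *
        ((∏ i, (Lc i : ℝ)) * ((π / 2) * (t / τ)) ^ q) * τ ^ (p - 1) := by
        apply mul_le_mul_of_nonneg_right _ (pow_nonneg hτ0.le _)
        refine mul_le_mul (mul_le_mul_of_nonneg_left hB1 (abs_nonneg _)) hB2 (abs_nonneg _) ?_
        exact mul_nonneg (abs_nonneg _) (mul_nonneg (le_trans zero_le_one hM)
          (pow_nonneg (div_nonneg ht0.le hτ0.le) n))
    _ = (1 / (2 * π)) * (∏ i, max 1 (Lb i : ℝ)) * (π / 2) ^ q * (∏ i, (Lc i : ℝ)) *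
        ((t / τ) ^ (n + q) * τ ^ (p - 1)) := by
        rw [abs_of_pos (by positivity : (0:ℝ) < 1 / (2 * π)), mul_pow, pow_add]
        ring
    _ ≤ (1 / (2 * π)) * (∏ i, max 1 (Lb i : ℝ)) * (π / 2) ^ q * (∏ i, (Lc i : ℝ)) * 1 := by
        apply mul_le_mul_of_nonneg_left hkey
        have : (0:ℝ) ≤ ∏ i, (Lc i : ℝ) := Finset.prod_nonneg fun i _ => (Lc i).coe_nonneg
        positivity
    _ = (1 / (2 * π)) * (∏ i, max 1 (Lb i : ℝ)) * (π / 2) ^ q * ∏ i, (Lc i : ℝ) := by ring
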